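/- (Proposition 10) Let Σ be a finite connected 2-dimensional simplicial complex with β_2(Σ) ≥ 1 such that the space Z_2(Σ) of Z_2 2-cycles admits a 2-complete basis (by Theorem 2 of the paper, this holds whenever Σ is PL embeddable into ℝ^{3}). Then f_2(Σ) ≤ 2·( f_1(Σ) − β_1(Σ) − n ), where n is the number of vertices of Σ. -/

import Mathlib

open Finset

/-- A finite simplicial complex on a finite vertex type `V`:
a finite nonempty collection of nonempty finite sets (faces)
closed under taking nonempty subsets. -/
structure SComplex (V : Type) [DecidableEq V] [Fintype V] where
  faces : Finset (Finset V)
  nonempty : faces.Nonempty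
  no_empty : ∀ σ ∈ faces, σ ≠ ∅
  down_closed : ∀ σ ∈ faces, ∀ τ, τ ⊆ σ → τ ≠ ∅ → τ ∈ faces

namespace SComplex

variable {V : Type} [DecidableEq V] [Fintype V]

/-- The set of faces of dimension `i` (i.e. of cardinality `i+1`). -/
def facesDim (K : SComplex V) (i : ℕ) : Finset (Finset V) :=
  K.faces.filter (fun σ => σ.card = i + 1)

/-- `fnum K i` is the face number `f_i`. -/
def fnum (K : SComplex V) (i : ℕ) : ℕ := (K.facesDim i).card

/-- The space of `Z_2` `i`-chains: functions from the `i`-faces to `Z_2`. -/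
abbrev Chains (K : SComplex V) (i : ℕ) : Type := {σ // σ ∈ K.facesDim i} → ZMod 2

/-- The boundary map `∂_i : C_i → C_{i-1}` (and `∂_0 = 0`): the value of `∂ c` on an
`(i-1)`-face `τ` is the sum over `i`-faces `σ ⊇ τ` of `c σ`. -/
def boundary (K : SComplex V) (i : ℕ) : Chains K i →ₗ[ZMod 2] Chains K (i - 1) :=
  if i = 0 then 0 else
  { toFun := fun c τ =>
      ∑ σ : {σ // σ ∈ K.facesDim i}, if (τ : Finset V) ⊆ (σ : Finset V) then c σ else 0
    map_add' := by
      intro c d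
      funext τ
      show (∑ σ : {σ // σ ∈ K.facesDim i}, _) = _
      rw [Pi.add_apply, ← Finset.sum_add_distrib]
      apply Finset.sum_congr rfl
      intro σ _
      by_cases h : (τ : Finset V) ⊆ (σ : Finset V) <;> simp [h]
    map_smul' := by
      intro a c
      funext τ
      show (∑ σ : {σ // σ ∈ K.facesDim i}, _) = _
      rw [RingHom.id_apply, Pi.smul_apply, smul_eq_mul, Finset.mul_sum]
      apply Finset.sum_congr rfl
      intro σ _
      by_cases h : (τ : Finset V) ⊆ (σ : Finset V) <;> simp [h] }

/-- The `i`-th `Z_2` Betti number: `dim ker ∂_i − rank ∂_{i+1}`. -/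
noncomputable def betti (K : SComplex V) (i : ℕ) : ℕ :=
  Module.finrank (ZMod 2) (LinearMap.ker (K.boundary i)) -
    Module.finrank (ZMod 2) (LinearMap.range (K.boundary (i + 1)))

/-- The number of `i`-faces in the support of a chain. -/
def suppCard {K : SComplex V} {i : ℕ} (c : Chains K i) : ℕ :=
  (Finset.univ.filter (fun σ => c σ ≠ 0)).card

/-- The girth: the minimal support size of a nonzero `d`-cycle. -/
noncomputable def girth (K : SComplex V) (d : ℕ) : ℕ :=
  sInf {n | ∃ c : Chains K d, c ∈ LinearMap.ker (K.boundary d) ∧ c ≠ 0 ∧ suppCard c = n}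

/-- `Z_d(K)` admits an `m`-complete basis: a basis of the space of `d`-cycles such that every
`d`-face lies in the support of at most `m` basis elements. -/
def HasCompleteBasis (K : SComplex V) (d m : ℕ) : Prop :=
  ∃ (ι : Type) (_ : Fintype ι) (b : Module.Basis ι (ZMod 2) (LinearMap.ker (K.boundary d))),
    ∀ σ : {σ // σ ∈ K.facesDim d},
      (Finset.univ.filter (fun i : ι => (b i).1 σ ≠ 0)).card ≤ m

/-- `K` is `d`-dimensional: `d` is the maximal dimension of a face. -/
def IsDim (K : SComplex V) (d : ℕ) : Prop :=
  (∀ σ ∈ K.faces, σ.card ≤ d + 1) ∧ ∃ σ ∈ K.faces, σ.card = d + 1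

/-- `K` is pure `d`-dimensional: every face is contained in a `d`-face. -/
def IsPure (K : SComplex V) (d : ℕ) : Prop :=
  ∀ σ ∈ K.faces, ∃ τ ∈ K.faces, σ ⊆ τ ∧ τ.card = d + 1

/-- A `d`-dimensional complex is balanced if its vertices can be colored with `d+1` colors
so that the coloring is injective on every face. -/
def IsBalanced (K : SComplex V) (d : ℕ) : Prop :=
  ∃ coloring : V → Fin (d + 1), ∀ σ ∈ K.faces, Set.InjOn coloring (σ : Set V)

/-- The `d`-skeleton of `K`: all faces of dimension at most `d`. -/
def skeleton (K : SComplex V) (d : ℕ) : SComplex V where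
  faces := K.faces.filter (fun σ => σ.card ≤ d + 1)
  nonempty := by
    obtain ⟨σ, hσ⟩ := K.nonempty
    obtain ⟨v, hv⟩ := Finset.nonempty_iff_ne_empty.mpr (K.no_empty σ hσ)
    refine ⟨{v}, Finset.mem_filter.mpr ⟨K.down_closed σ hσ {v}
      (Finset.singleton_subset_iff.mpr hv) (Finset.singleton_ne_empty v), by simp⟩⟩
  no_empty := by
    intro σ hσ
    exact K.no_empty σ (Finset.mem_filter.mp hσ).1
  down_closed := by
    intro σ hσ τ hτσ hτ
    rw [Finset.mem_filter] at hσ ⊢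
    exact ⟨K.down_closed σ hσ.1 τ hτσ hτ, le_trans (Finset.card_le_card hτσ) hσ.2⟩

end SComplex

open SComplex

section Helpers

variable {V : Type} [DecidableEq V] [Fintype V]

lemma boundary_apply (K : SComplex V) {i : ℕ} (hi : i ≠ 0) (c : Chains K i)
    (τ : {σ // σ ∈ K.facesDim (i - 1)}) :
    K.boundary i c τ =
      ∑ σ : {σ // σ ∈ K.facesDim i}, if (τ : Finset V) ⊆ (σ : Finset V) then c σ else 0 := by
  rw [SComplex.boundary, if_neg hi]
  rfl

lemma zmod2_cases : ∀ x : ZMod 2, x = 0 ∨ x = 1 := by decide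


lemma cycle_supp_ge (K : SComplex V) (c : Chains K 2)
    (hc : K.boundary 2 c = 0) (hne : c ≠ 0) : 4 ≤ suppCard c := by
  classical
  obtain ⟨σ₀, hσ₀⟩ : ∃ σ, c σ ≠ 0 := Function.ne_iff.mp hne
  have hσ₀f : σ₀.1 ∈ K.faces ∧ σ₀.1.card = 3 := by
    have h := σ₀.2; simp only [SComplex.facesDim, Finset.mem_filter] at h; exact h
  have key : ∀ τ ∈ σ₀.1.powersetCard 2,
      ∃ σ' : {σ // σ ∈ K.facesDim 2}, σ' ≠ σ₀ ∧ τ ⊆ σ'.1 ∧ c σ' ≠ 0 := by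
    intro τ hτ
    rw [Finset.mem_powersetCard] at hτ
    have hτne : τ ≠ ∅ := by
      intro h; rw [h] at hτ; simp at hτ
    have hτF : τ ∈ K.facesDim 1 := by
      rw [SComplex.facesDim, Finset.mem_filter]
      exact ⟨K.down_closed _ hσ₀f.1 τ hτ.1 hτne, hτ.2⟩
    have h0 : K.boundary 2 c ⟨τ, hτF⟩ = 0 := by rw [hc]; rfl
    rw [boundary_apply K (by norm_num) c ⟨τ, hτF⟩] at h0
    by_contra hno
    push_neg at hno
    rw [Finset.sum_eq_single σ₀] at h0
    · rw [if_pos hτ.1] at h0; exact hσ₀ h0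
    · intro σ' _ hne'
      by_cases hsub : τ ⊆ σ'.1
      · rw [if_pos hsub]; exact hno σ' hne' hsub
      · exact if_neg hsub
    · intro h; exact absurd (Finset.mem_univ σ₀) h
  set S := Finset.univ.filter (fun σ => c σ ≠ 0) with hS
  have hσ₀S : σ₀ ∈ S := by simp [hS, hσ₀]
  choose g hg1 hg2 hg3 using key
  let f : Finset V → {σ // σ ∈ K.facesDim 2} := fun τ =>
    if h : τ ∈ σ₀.1.powersetCard 2 then g τ h else σ₀
  have hmaps : ∀ τ ∈ σ₀.1.powersetCard 2, f τ ∈ S.erase σ₀ := by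
    intro τ hτ
    simp only [f, dif_pos hτ]
    refine Finset.mem_erase.mpr ⟨hg1 τ hτ, ?_⟩
    simp [hS, hg3 τ hτ]
  have hinj : Set.InjOn f (σ₀.1.powersetCard 2) := by
    intro τ₁ h₁ τ₂ h₂ heq
    rw [Finset.mem_coe] at h₁ h₂
    by_contra hne12
    have h₁' := Finset.mem_powersetCard.mp h₁
    have h₂' := Finset.mem_powersetCard.mp h₂
    have e1 : τ₁ ⊆ (f τ₁).1 := by simp only [f, dif_pos h₁]; exact hg2 τ₁ h₁
    have e2 : τ₂ ⊆ (f τ₁).1 := by rw [heq]; simp only [f, dif_pos h₂]; exact hg2 τ₂ h₂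
    have hne' : f τ₁ ≠ σ₀ := by simp only [f, dif_pos h₁]; exact hg1 τ₁ h₁
    have hcard' : (f τ₁).1.card = 3 := by
      have h := (f τ₁).2; simp only [SComplex.facesDim, Finset.mem_filter] at h; exact h.2
    have hu3 : 3 ≤ (τ₁ ∪ τ₂).card := by
      by_contra hlt
      push_neg at hlt
      have e3 : τ₁ = τ₁ ∪ τ₂ :=
        Finset.eq_of_subset_of_card_le Finset.subset_union_left (by omega)
      have e4 : τ₂ = τ₁ ∪ τ₂ :=
        Finset.eq_of_subset_of_card_le Finset.subset_union_right (by omega)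
      exact hne12 (e3.trans e4.symm)
    have huσ₀ : τ₁ ∪ τ₂ = σ₀.1 :=
      Finset.eq_of_subset_of_card_le (Finset.union_subset h₁'.1 h₂'.1) (by omega)
    have huσ' : τ₁ ∪ τ₂ = (f τ₁).1 :=
      Finset.eq_of_subset_of_card_le (Finset.union_subset e1 e2) (by omega)
    exact hne' (Subtype.ext (huσ'.symm.trans huσ₀))
  have h3 : (σ₀.1.powersetCard 2).card ≤ (S.erase σ₀).card :=
    Finset.card_le_card_of_injOn f hmaps hinj
  have hpc : (σ₀.1.powersetCard 2).card = 3 := by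
    rw [Finset.card_powersetCard, hσ₀f.2]; decide
  have herase : (S.erase σ₀).card + 1 = S.card := Finset.card_erase_add_one hσ₀S
  have : suppCard c = S.card := rfl
  omega



lemma card_filter_subtype {α : Type} [DecidableEq α] (s : Finset α) (p : α → Prop)
    [DecidablePred p] :
    (Finset.univ.filter (fun x : {x // x ∈ s} => p x.1)).card = (s.filter p).card := by
  apply Finset.card_bij (fun x _ => x.1)
  · intro a ha
    rw [Finset.mem_filter] at ha ⊢
    exact ⟨a.2, ha.2⟩
  · intro a _ b _ h; exact Subtype.ext h
  · intro b hb
    rw [Finset.mem_filter] at hb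
    exact ⟨⟨b, hb.1⟩, Finset.mem_filter.mpr ⟨Finset.mem_univ _, hb.2⟩, rfl⟩

lemma range_le_ker (K : SComplex V) :
    LinearMap.range (K.boundary 2) ≤ LinearMap.ker (K.boundary 1) := by
  classical
  rintro _ ⟨c, rfl⟩
  rw [LinearMap.mem_ker]
  funext v
  show K.boundary 1 (K.boundary 2 c) v = 0
  rw [boundary_apply K one_ne_zero]
  have hv : v.1 ∈ K.faces ∧ v.1.card = 1 := by
    have h := v.2; simp only [SComplex.facesDim, Finset.mem_filter] at h; exact h
  have h1 : ∑ τ : {σ // σ ∈ K.facesDim 1},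
        (if (v : Finset V) ⊆ (τ : Finset V) then K.boundary 2 c τ else 0)
      = ∑ τ : {σ // σ ∈ K.facesDim 1}, ∑ σ : {σ // σ ∈ K.facesDim 2},
          if (v : Finset V) ⊆ (τ : Finset V) ∧ (τ : Finset V) ⊆ (σ : Finset V)
          then c σ else 0 := by
    apply Finset.sum_congr rfl; intro τ _
    by_cases h : (v : Finset V) ⊆ (τ : Finset V)
    · rw [if_pos h, boundary_apply K two_ne_zero]
      apply Finset.sum_congr rfl; intro σ _
      by_cases h2 : (τ : Finset V) ⊆ (σ : Finset V) <;> simp [h, h2]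
    · rw [if_neg h]; symm
      apply Finset.sum_eq_zero; intro σ _
      rw [if_neg]; tauto
  rw [h1, Finset.sum_comm]
  apply Finset.sum_eq_zero
  intro σ _
  have hσ : σ.1 ∈ K.faces ∧ σ.1.card = 3 := by
    have h := σ.2; simp only [SComplex.facesDim, Finset.mem_filter] at h; exact h
  have hconst : ∑ τ : {σ' // σ' ∈ K.facesDim 1},
        (if (v : Finset V) ⊆ (τ : Finset V) ∧ (τ : Finset V) ⊆ (σ : Finset V)
         then c σ else 0)
      = (Finset.univ.filter (fun τ : {σ' // σ' ∈ K.facesDim 1} =>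
          (v : Finset V) ⊆ (τ : Finset V) ∧ (τ : Finset V) ⊆ (σ : Finset V))).card • c σ := by
    rw [← Finset.sum_filter, Finset.sum_const]
  rw [hconst]
  have hcfs := card_filter_subtype (K.facesDim 1)
    (fun τ => (v : Finset V) ⊆ τ ∧ τ ⊆ (σ : Finset V))
  rw [hcfs]
  have hcard : ((K.facesDim 1).filter
      (fun τ => (v : Finset V) ⊆ τ ∧ τ ⊆ (σ : Finset V))).card = 0 ∨
      ((K.facesDim 1).filter
      (fun τ => (v : Finset V) ⊆ τ ∧ τ ⊆ (σ : Finset V))).card = 2 := by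
    by_cases hvσ : (v : Finset V) ⊆ (σ : Finset V)
    · right
      have himg : (K.facesDim 1).filter
          (fun τ => (v : Finset V) ⊆ τ ∧ τ ⊆ (σ : Finset V))
          = ((σ : Finset V) \ (v : Finset V)).image (fun y => insert y (v : Finset V)) := by
        ext τ
        simp only [Finset.mem_filter, Finset.mem_image, Finset.mem_sdiff,
          SComplex.facesDim]
        constructor
        · rintro ⟨⟨_, hτ2⟩, hvτ, hτσ⟩
          obtain ⟨y, hy⟩ : ∃ y, τ \ (v : Finset V) = {y} := by
            rw [← Finset.card_eq_one, Finset.card_sdiff_of_subset hvτ, hτ2, hv.2]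
          have hyτ : y ∈ τ \ (v : Finset V) := by rw [hy]; exact Finset.mem_singleton_self y
          rw [Finset.mem_sdiff] at hyτ
          refine ⟨y, ⟨hτσ hyτ.1, hyτ.2⟩, ?_⟩
          have : insert y (v : Finset V) = τ \ (v : Finset V) ∪ (v : Finset V) := by
            rw [hy]; rfl
          rw [this, Finset.sdiff_union_self_eq_union, Finset.union_eq_left.mpr hvτ]
        · rintro ⟨y, ⟨hyσ, hyv⟩, rfl⟩
          have hins : insert y (v : Finset V) ⊆ (σ : Finset V) :=
            Finset.insert_subset hyσ hvσ
          have hcard2 : (insert y (v : Finset V)).card = 2 := by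
            rw [Finset.card_insert_of_notMem hyv, hv.2]
          refine ⟨⟨K.down_closed _ hσ.1 _ hins ?_, hcard2⟩,
            Finset.subset_insert _ _, hins⟩
          intro h
          rw [h] at hcard2; simp at hcard2
      rw [himg, Finset.card_image_of_injOn, Finset.card_sdiff_of_subset hvσ, hσ.2, hv.2]
      intro y hy y' hy' heq
      rw [Finset.mem_coe, Finset.mem_sdiff] at hy hy'
      have heq' : insert y (v : Finset V) = insert y' (v : Finset V) := heq
      have : y ∈ insert y' (v : Finset V) := heq' ▸ Finset.mem_insert_self y _
      rcases Finset.mem_insert.mp this with h | h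
      · exact h
      · exact absurd h hy.2
    · left
      rw [Finset.card_eq_zero, Finset.filter_eq_empty_iff]
      intro τ _
      rintro ⟨hvτ, hτσ⟩
      exact hvσ (hvτ.trans hτσ)
  rcases hcard with h | h <;> rw [h]
  · simp
  · rw [two_smul, CharTwo.add_self_eq_zero]



lemma counting (K : SComplex V) {ι : Type} [Fintype ι] [Nonempty ι]
    (b : Module.Basis ι (ZMod 2) (LinearMap.ker (K.boundary 2)))
    (hb : ∀ σ : {σ // σ ∈ K.facesDim 2},
      (Finset.univ.filter (fun i : ι => (b i).1 σ ≠ 0)).card ≤ 2) :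
    2 * Fintype.card ι + 2 ≤ K.fnum 2 := by
  classical
  set count : {σ // σ ∈ K.facesDim 2} → ℕ :=
    fun σ => (Finset.univ.filter (fun i : ι => (b i).1 σ ≠ 0)).card with hcount
  have hswap : ∑ i : ι, suppCard ((b i) : Chains K 2) = ∑ σ, count σ := by
    simp only [suppCard, hcount, Finset.card_filter]
    rw [Finset.sum_comm]
  have hlow : ∀ i : ι, 4 ≤ suppCard ((b i) : Chains K 2) := by
    intro i
    refine cycle_supp_ge K _ (LinearMap.mem_ker.mp (b i).2) ?_
    intro h
    exact Module.Basis.ne_zero b i (Submodule.coe_eq_zero.mp h)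
  set s : LinearMap.ker (K.boundary 2) := ∑ i, b i with hsdef
  have hs0 : (s : Chains K 2) ≠ 0 := by
    intro h
    have hs : s = 0 := Submodule.coe_eq_zero.mp h
    have hli := Fintype.linearIndependent_iff.mp b.linearIndependent (fun _ => 1)
      (by simpa [one_smul] using hs) (Classical.arbitrary ι)
    exact one_ne_zero hli
  have hsval : ∀ σ, (s : Chains K 2) σ = ((count σ : ℕ) : ZMod 2) := by
    intro σ
    have h1 : (s : Chains K 2) σ = ∑ i, (b i).1 σ := by
      rw [hsdef]
      rw [AddSubmonoidClass.coe_finset_sum]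
      rw [Finset.sum_apply]
    rw [h1]
    have h2 : ∑ i, (b i).1 σ = ∑ i, (if (b i).1 σ ≠ 0 then (1 : ZMod 2) else 0) := by
      apply Finset.sum_congr rfl; intro i _
      rcases zmod2_cases ((b i).1 σ) with h | h <;> simp [h]
    rw [h2, Finset.sum_boole, hcount]
  have hpoint : ∀ σ, count σ + (if (s : Chains K 2) σ ≠ 0 then 1 else 0) ≤ 2 := by
    intro σ
    by_cases h : (s : Chains K 2) σ ≠ 0
    · rw [if_pos h]
      have hle2 := hb σ
      have hne0 : count σ ≠ 0 := by
        intro h0; rw [hsval σ, h0] at h; simp at h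
      have hne2 : count σ ≠ 2 := by
        intro h2; rw [hsval σ, h2] at h; exact h (by decide)
      have : count σ ≤ 2 := hle2
      omega
    · rw [if_neg h]; exact hb σ
  have hsum : (∑ σ, count σ) + suppCard ((s : Chains K 2)) ≤ 2 * K.fnum 2 := by
    have h1 : ∑ σ, (count σ + (if (s : Chains K 2) σ ≠ 0 then 1 else 0))
        ≤ ∑ _σ : {σ // σ ∈ K.facesDim 2}, 2 :=
      Finset.sum_le_sum (fun σ _ => hpoint σ)
    rw [Finset.sum_add_distrib] at h1
    have h2 : suppCard ((s : Chains K 2))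
        = ∑ σ, (if (s : Chains K 2) σ ≠ 0 then 1 else 0) := by
      simp [suppCard, Finset.card_filter]
    have h3 : ∑ _σ : {σ // σ ∈ K.facesDim 2}, 2 = 2 * K.fnum 2 := by
      rw [Finset.sum_const, Finset.card_univ, Fintype.card_coe, smul_eq_mul, mul_comm]
      rfl
    rw [h2]
    omega
  have hss : 4 ≤ suppCard ((s : Chains K 2)) :=
    cycle_supp_ge K _ (LinearMap.mem_ker.mp s.2) hs0
  have hlowsum : 4 * Fintype.card ι ≤ ∑ σ, count σ := by
    rw [← hswap]
    calc 4 * Fintype.card ι = ∑ _i : ι, 4 := by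
          rw [Finset.sum_const, Finset.card_univ, smul_eq_mul, mul_comm]
      _ ≤ ∑ i, suppCard ((b i) : Chains K 2) := Finset.sum_le_sum (fun i _ => hlow i)
  omega



lemma finrank_chains (K : SComplex V) (i : ℕ) :
    Module.finrank (ZMod 2) (Chains K i) = K.fnum i := by
  rw [Module.finrank_pi, Fintype.card_coe]
  rfl

lemma boundary_zero_map (K : SComplex V) : K.boundary 0 = 0 := by
  rw [SComplex.boundary, if_pos rfl]

lemma facesDim3_empty (K : SComplex V) (hdim : K.IsDim 2) : K.facesDim 3 = ∅ := by
  rw [Finset.eq_empty_iff_forall_notMem]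
  intro σ hσ
  simp only [SComplex.facesDim, Finset.mem_filter] at hσ
  have := hdim.1 σ hσ.1
  omega

lemma range3_bot (K : SComplex V) (hdim : K.IsDim 2) :
    LinearMap.range (K.boundary 3) = ⊥ := by
  rw [LinearMap.range_eq_bot]
  apply LinearMap.ext
  intro c
  have hc : c = 0 := by
    funext σ
    exact (Finset.eq_empty_iff_forall_notMem.mp (facesDim3_empty K hdim) σ.1 σ.2).elim
  rw [hc, map_zero]
  rfl


end Helpers

/-- Proposition 10. -/
theorem prop10 {V : Type} [DecidableEq V] [Fintype V]
    (K : SComplex V) (hdim : K.IsDim 2) (hconn : K.betti 0 = 1)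
    (hβ : 1 ≤ K.betti 2) (hcb : K.HasCompleteBasis 2 2) :
    (K.fnum 2 : ℤ) ≤ 2 * ((K.fnum 1 : ℤ) - (K.betti 1 : ℤ) - (K.fnum 0 : ℤ)) := by
  classical
  obtain ⟨ι, hι, b, hb⟩ := hcb
  set k1 := Module.finrank (ZMod 2) (LinearMap.ker (K.boundary 1)) with hk1
  set r1 := Module.finrank (ZMod 2) (LinearMap.range (K.boundary 1)) with hr1
  set k2 := Module.finrank (ZMod 2) (LinearMap.ker (K.boundary 2)) with hk2
  set r2 := Module.finrank (ZMod 2) (LinearMap.range (K.boundary 2)) with hr2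
  have hrn1 : r1 + k1 = K.fnum 1 := by
    rw [hr1, hk1, LinearMap.finrank_range_add_finrank_ker, finrank_chains]
  have hrn2 : r2 + k2 = K.fnum 2 := by
    rw [hr2, hk2, LinearMap.finrank_range_add_finrank_ker, finrank_chains]
  have hker0 : LinearMap.ker (K.boundary 0) = ⊤ := by
    rw [boundary_zero_map]; exact LinearMap.ker_zero
  have hb0 : K.betti 0 = K.fnum 0 - r1 := by
    rw [SComplex.betti, hker0]
    congr 1
    rw [finrank_top, finrank_chains]
  have hr1le : r1 ≤ K.fnum 0 := by
    rw [← finrank_chains K 0, hr1]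
    exact Submodule.finrank_le _
  have hn : K.fnum 0 = r1 + 1 := by
    rw [hb0] at hconn; omega
  have hr2k1 : r2 ≤ k1 := Submodule.finrank_mono (range_le_ker K)
  have hb1 : K.betti 1 = k1 - r2 := rfl
  have hb2 : K.betti 2 = k2 := by
    rw [SComplex.betti, range3_bot K hdim, finrank_bot, Nat.sub_zero, hk2]
  have hk2card : k2 = Fintype.card ι := Module.finrank_eq_card_basis b
  have hιne : Nonempty ι := by
    rw [hb2, hk2card] at hβ
    exact Fintype.card_pos_iff.mp hβ
  have hcnt : 2 * k2 + 2 ≤ K.fnum 2 := by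
    rw [hk2card]; exact counting K b hb
  have e1 : (K.betti 1 : ℤ) = (k1 : ℤ) - (r2 : ℤ) := by
    rw [hb1, Nat.cast_sub hr2k1]
  rw [e1]
  omega
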